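/- The Marginal Equal Share (MES) rule satisfies incentive for early arrival (EA): for any monotone normalized valuation v, fixing the arrival order of all other players, a player i who arrives at position p receives total final share at least as large as if she delayed to any later position, i.e., if π' is obtained from π by moving i from position p to a later position (keeping the relative order of others), then φ_MES(G, i) ≥ φ_MES(G', i) where G = (N, v, π), G' = (N, v, π'). -/

import Mathlib

variable {α : Type*} [DecidableEq α]

/-- Amount MES gives player `p` at the `t`-th arrival (0-indexed), when players arrive
in the order given by the list `L`: the marginal contribution
`v (take (t+1) L) - v (take t L)` of the new arrival is split equally among the
`t+1` arrived players. -/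
noncomputable def mesStepL (v : Finset α → ℝ) (L : List α) (t : ℕ) (p : α) : ℝ :=
  if p ∈ (L.take (t + 1)).toFinset then
    (v (L.take (t + 1)).toFinset - v (L.take t).toFinset) / ((t + 1 : ℕ) : ℝ)
  else 0

/-- Total (final) MES share of player `p` under arrival order `L`. -/
noncomputable def mesTotalL (v : Finset α → ℝ) (L : List α) (p : α) : ℝ :=
  ∑ t ∈ Finset.range L.length, mesStepL v L t p

lemma mes_toFinset_take_split (A B : List α) (i : α) (t : ℕ) (ht : A.length < t) :
    ((A ++ i :: B).take t).toFinset = insert i ((A ++ B).take (t - 1)).toFinset := by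
  obtain ⟨s, rfl⟩ : ∃ s, t = A.length + 1 + s := ⟨t - (A.length + 1), by omega⟩
  have h1 : (A ++ i :: B).take (A.length + 1 + s) = A ++ i :: B.take s := by
    have : A.length + 1 + s = A.length + (1 + s) := by omega
    rw [this, List.take_length_add_append]; rw [Nat.add_comm 1 s, List.take_succ_cons]
  have h2 : (A ++ B).take (A.length + 1 + s - 1) = A ++ B.take s := by
    have : A.length + 1 + s - 1 = A.length + s := by omega
    rw [this, List.take_length_add_append]
  rw [h1, h2]
  ext x
  simp [or_comm, or_left_comm, or_assoc]

/-- Decomposition of a list around a member. -/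
lemma mes_decomp (L : List α) (i : α) (hi : i ∈ L) :
    L = L.take (L.idxOf i) ++ i :: L.drop (L.idxOf i + 1) ∧
      L.erase i = L.take (L.idxOf i) ++ L.drop (L.idxOf i + 1) := by
  have hp : L.idxOf i < L.length := List.idxOf_lt_length_iff.mpr hi
  constructor
  · conv_lhs => rw [← List.take_append_drop (L.idxOf i) L]
    rw [List.drop_eq_getElem_cons hp, List.getElem_idxOf hp]
  · rw [List.erase_eq_eraseIdx_of_idxOf rfl, List.eraseIdx_eq_take_drop_succ]

/-- Characterization of `i`'s MES step in terms of prefixes of `L.erase i`. -/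
lemma mesStep_char (v : Finset α → ℝ) (L : List α) (hL : L.Nodup)
    (i : α) (hi : i ∈ L) (t : ℕ) :
    mesStepL v L t i =
      if t < L.idxOf i then 0
      else if t = L.idxOf i then
        (v (insert i ((L.erase i).take t).toFinset) - v (((L.erase i).take t).toFinset))
          / ((t + 1 : ℕ) : ℝ)
      else
        (v (insert i ((L.erase i).take t).toFinset)
          - v (insert i ((L.erase i).take (t - 1)).toFinset)) / ((t + 1 : ℕ) : ℝ) := by
  obtain ⟨hLd, hEd⟩ := mes_decomp L i hi
  set p := L.idxOf i with hp
  have hp' : p < L.length := List.idxOf_lt_length_iff.mpr hi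
  have hlenA : (L.take p).length = p := List.length_take_of_le (le_of_lt hp')
  have htake : ∀ s, p < s →
      (L.take s).toFinset = insert i (((L.erase i).take (s - 1)).toFinset) := by
    intro s hs
    rw [hEd]
    conv_lhs => rw [hLd]
    exact mes_toFinset_take_split _ _ _ _ (by rw [hlenA]; exact hs)
  have htake_lo : ∀ s, s ≤ p → L.take s = (L.erase i).take s := by
    intro s hs
    rw [hEd]
    conv_lhs => rw [hLd]
    rw [List.take_append_of_le_length (by rw [hlenA]; exact hs),
      List.take_append_of_le_length (by rw [hlenA]; exact hs)]
  have hinotM : i ∉ L.erase i := hL.not_mem_erase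
  rcases lt_trichotomy t p with h | h | h
  · rw [if_pos h]
    have : i ∉ (L.take (t + 1)).toFinset := by
      rw [htake_lo (t + 1) (by omega)]
      intro hmem
      exact hinotM (List.take_subset _ _ (List.mem_toFinset.mp hmem))
    rw [mesStepL, if_neg this]
  · rw [if_neg (by omega), if_pos h, mesStepL]
    have h1 : (L.take (t + 1)).toFinset = insert i (((L.erase i).take t).toFinset) := by
      have := htake (t + 1) (by omega)
      simpa using this
    rw [h1, htake_lo t (le_of_eq h), if_pos (Finset.mem_insert_self _ _)]
  · rw [if_neg (by omega), if_neg (by omega), mesStepL]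
    have h1 : (L.take (t + 1)).toFinset = insert i (((L.erase i).take t).toFinset) := by
      have := htake (t + 1) (by omega)
      simpa using this
    have h2 : (L.take t).toFinset = insert i (((L.erase i).take (t - 1)).toFinset) :=
      htake t h
    rw [h1, h2, if_pos (Finset.mem_insert_self _ _)]

/-- Key arithmetic inequality. -/
lemma mes_key (F W : ℕ → ℝ) (hFW : ∀ t, F t ≤ W t) (hW : ∀ t, W t ≤ W (t + 1))
    (hF : ∀ t, F t ≤ F (t + 1)) (p q : ℕ) (hpq : p ≤ q) :
    (W q - F q) / ((q + 1 : ℕ) : ℝ) ≤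
      (W p - F p) / ((p + 1 : ℕ) : ℝ)
        + ∑ t ∈ Finset.Ioc p q, (W t - W (t - 1)) / ((t + 1 : ℕ) : ℝ) := by
  induction q, hpq using Nat.le_induction with
  | base => simp
  | succ q hpq ih =>
    rw [Finset.sum_Ioc_succ_top (by omega : p ≤ q), ← add_assoc]
    have hq1 : ((q + 1 + 1 : ℕ) : ℝ) > 0 := by positivity
    have hq0 : ((q + 1 : ℕ) : ℝ) > 0 := by positivity
    have key1 : (W q - F q) / ((q + 1 + 1 : ℕ) : ℝ) ≤ (W q - F q) / ((q + 1 : ℕ) : ℝ) := by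
      apply div_le_div_of_nonneg_left (by linarith [hFW q]) hq0
      push_cast; linarith
    have key2 : (W (q + 1) - F (q + 1)) / ((q + 1 + 1 : ℕ) : ℝ) ≤
        (W q - F q) / ((q + 1 + 1 : ℕ) : ℝ) + (W (q + 1) - W q) / ((q + 1 + 1 : ℕ) : ℝ) := by
      rw [← add_div]
      gcongr
      linarith [hF q]
    have : (q + 1 + 1 - 1 : ℕ) = q + 1 - 1 + 1 := by omega
    calc (W (q + 1) - F (q + 1)) / ((q + 1 + 1 : ℕ) : ℝ)
        ≤ (W q - F q) / ((q + 1 + 1 : ℕ) : ℝ) + (W (q + 1) - W q) / ((q + 1 + 1 : ℕ) : ℝ) := key2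
      _ ≤ (W q - F q) / ((q + 1 : ℕ) : ℝ) + (W (q + 1) - W q) / ((q + 1 + 1 : ℕ) : ℝ) := by
          linarith [key1]
      _ ≤ ((W p - F p) / ((p + 1 : ℕ) : ℝ)
            + ∑ t ∈ Finset.Ioc p q, (W t - W (t - 1)) / ((t + 1 : ℕ) : ℝ))
          + (W (q + 1) - W (q + 1 - 1)) / ((q + 1 + 1 : ℕ) : ℝ) := by
          have : (q + 1 - 1 : ℕ) = q := by omega
          rw [this]
          linarith [ih]

/-- The MES step profile of player at arrival position `r`, in terms of
the sequences `F` (value of prefix of the others) and `W` (value with `i` added). -/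
noncomputable def mesProfile (F W : ℕ → ℝ) (r t : ℕ) : ℝ :=
  if t < r then 0
  else if t = r then (W t - F t) / ((t + 1 : ℕ) : ℝ)
  else (W t - W (t - 1)) / ((t + 1 : ℕ) : ℝ)

lemma mes_sum_mono (F W : ℕ → ℝ) (hFW : ∀ t, F t ≤ W t) (hW : ∀ t, W t ≤ W (t + 1))
    (hF : ∀ t, F t ≤ F (t + 1)) (n p q : ℕ) (hpq : p ≤ q) (hq : q < n) :
    ∑ t ∈ Finset.range n, mesProfile F W q t ≤ ∑ t ∈ Finset.range n, mesProfile F W p t := by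
  have hsplit : ∀ r, r ≤ q →
      ∑ t ∈ Finset.range n, mesProfile F W r t =
        ∑ t ∈ Finset.range (q + 1), mesProfile F W r t
          + ∑ t ∈ Finset.Ico (q + 1) n, mesProfile F W r t := by
    intro r _
    rw [Finset.sum_range_add_sum_Ico _ (by omega : q + 1 ≤ n)]
  rw [hsplit q le_rfl, hsplit p hpq]
  have htail : ∑ t ∈ Finset.Ico (q + 1) n, mesProfile F W q t =
      ∑ t ∈ Finset.Ico (q + 1) n, mesProfile F W p t := by
    apply Finset.sum_congr rfl
    intro t ht
    rw [Finset.mem_Ico] at ht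
    unfold mesProfile
    rw [if_neg (by omega), if_neg (by omega), if_neg (by omega), if_neg (by omega)]
  rw [htail]
  apply add_le_add_left
  have hq' : ∑ t ∈ Finset.range (q + 1), mesProfile F W q t
      = (W q - F q) / ((q + 1 : ℕ) : ℝ) := by
    rw [Finset.sum_eq_single_of_mem q (Finset.self_mem_range_succ q)]
    · unfold mesProfile; rw [if_neg (lt_irrefl _), if_pos rfl]
    · intro t ht hne
      rw [Finset.mem_range] at ht
      unfold mesProfile
      rw [if_pos (by omega)]
  have hp' : ∑ t ∈ Finset.range (q + 1), mesProfile F W p t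
      = (W p - F p) / ((p + 1 : ℕ) : ℝ)
        + ∑ t ∈ Finset.Ioc p q, (W t - W (t - 1)) / ((t + 1 : ℕ) : ℝ) := by
    rw [← Finset.sum_range_add_sum_Ico _ (by omega : p + 1 ≤ q + 1)]
    congr 1
    · rw [Finset.sum_eq_single_of_mem p (Finset.self_mem_range_succ p)]
      · unfold mesProfile; rw [if_neg (lt_irrefl _), if_pos rfl]
      · intro t ht hne
        rw [Finset.mem_range] at ht
        unfold mesProfile
        rw [if_pos (by omega)]
    · have hIco : Finset.Ico (p + 1) (q + 1) = Finset.Ioc p q := by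
        ext x; simp [Finset.mem_Ico, Finset.mem_Ioc]
      rw [hIco]
      apply Finset.sum_congr rfl
      intro t ht
      rw [Finset.mem_Ioc] at ht
      unfold mesProfile
      rw [if_neg (by omega), if_neg (by omega)]
  rw [hq', hp']
  exact mes_key F W hFW hW hF p q hpq

/-- The MES rule satisfies incentive for early arrival (EA): for any monotone normalized
valuation, if `L'` is obtained from the arrival order `L` by delaying player `i`
(keeping the relative order of all other players), then `i`'s total MES share
under `L'` is at most her share under `L`. -/
theorem mes_ea (v : Finset α → ℝ)
    (hnorm : v ∅ = 0)
    (hmono : ∀ S T : Finset α, S ⊆ T → v S ≤ v T)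
    (L L' : List α) (hL : L.Nodup) (hL' : L'.Nodup) (hperm : L'.Perm L)
    (i : α) (hi : i ∈ L)
    (hothers : L.erase i = L'.erase i)
    (hdelay : L.idxOf i ≤ L'.idxOf i) :
    mesTotalL v L' i ≤ mesTotalL v L i := by
  have hi' : i ∈ L' := hperm.mem_iff.mpr hi
  have hlen : L'.length = L.length := hperm.length_eq
  set M := L.erase i with hM
  set F : ℕ → ℝ := fun t => v ((M.take t).toFinset) with hFdef
  set W : ℕ → ℝ := fun t => v (insert i ((M.take t).toFinset)) with hWdef
  have hsub : ∀ t : ℕ, (M.take t).toFinset ⊆ (M.take (t + 1)).toFinset := by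
    intro t x hx
    rw [List.mem_toFinset] at hx ⊢
    exact List.take_subset_take_left M (by omega) hx
  have hFW : ∀ t, F t ≤ W t := fun t => hmono _ _ (Finset.subset_insert _ _)
  have hW : ∀ t, W t ≤ W (t + 1) := fun t => hmono _ _ (Finset.insert_subset_insert _ (hsub t))
  have hF : ∀ t, F t ≤ F (t + 1) := fun t => hmono _ _ (hsub t)
  have hLtot : mesTotalL v L i = ∑ t ∈ Finset.range L.length, mesProfile F W (L.idxOf i) t := by
    unfold mesTotalL
    apply Finset.sum_congr rfl
    intro t _
    rw [mesStep_char v L hL i hi t]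
    rfl
  have hL'tot : mesTotalL v L' i =
      ∑ t ∈ Finset.range L.length, mesProfile F W (L'.idxOf i) t := by
    unfold mesTotalL
    rw [hlen]
    apply Finset.sum_congr rfl
    intro t _
    rw [mesStep_char v L' hL' i hi' t]
    rw [← hothers]
    rfl
  rw [hLtot, hL'tot]
  exact mes_sum_mono F W hFW hW hF L.length (L.idxOf i) (L'.idxOf i) hdelay
    (by rw [← hlen]; exact List.idxOf_lt_length_iff.mpr hi')
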